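/- Let W ⊆ M'_V ∪ M'_E and let M be a stable matching in I_W covering w* that contains a problematic pair {m_e,w_v} (where v is an endpoint of e). Then m'_e ∈ W and M(w_e) = m'_e, and for W' = (W ∖ {m'_e}) ∪ {m'_v} (so |W'| ≤ |W|), the matching M' = (M ∖ {{m_e,w_v},{m'_e,w_e}}) ∪ {{m_e,w_e},{m'_v,w_v}} is a stable matching in I_{W'} that covers w* and contains strictly fewer problematic pairs than M. -/

import Mathlib

/-- A Stable Roommates instance on agent type `α`: a symmetric, loopless
acceptability relation, together with, for each agent `u`, a strict linear
order `pref u` over the agents acceptable to `u`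
(`pref u x y` means `u` strictly prefers `x` to `y`). -/
structure SR (α : Type*) where
  accept : α → α → Prop
  symm : ∀ {u v}, accept u v → accept v u
  loopless : ∀ u, ¬ accept u u
  pref : α → α → α → Prop
  pref_acc : ∀ {u x y}, pref u x y → accept u x ∧ accept u y
  pref_irrefl : ∀ u x, ¬ pref u x x
  pref_trans : ∀ {u x y z}, pref u x y → pref u y z → pref u x z
  pref_total : ∀ {u x y}, accept u x → accept u y → x ≠ y → pref u x y ∨ pref u y x

namespace SR

variable {α : Type*}

/-- `M` is a matching in `I`: a set of acceptable pairs in which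
every agent has at most one partner. -/
def IsMatching (I : SR α) (M : Finset (Sym2 α)) : Prop :=
  (∀ u v : α, s(u, v) ∈ M → I.accept u v) ∧
  (∀ u v w : α, s(u, v) ∈ M → s(u, w) ∈ M → v = w)

/-- The pair `{u, v}` blocks the matching `M` in `I`. -/
def Blocks (I : SR α) (M : Finset (Sym2 α)) (u v : α) : Prop :=
  I.accept u v ∧ (∀ w, s(u, w) ∈ M → I.pref u v w) ∧ (∀ w, s(v, w) ∈ M → I.pref v u w)

/-- `M` is a stable matching in `I`. -/
def IsStable (I : SR α) (M : Finset (Sym2 α)) : Prop :=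
  I.IsMatching M ∧ ∀ u v, ¬ I.Blocks M u v

/-- The instance obtained from `I` by deleting the acceptability of the pairs in `F`. -/
def delPairs (I : SR α) (F : Set (Sym2 α)) : SR α where
  accept u v := I.accept u v ∧ s(u, v) ∉ F
  symm h := ⟨I.symm h.1, by rw [Sym2.eq_swap]; exact h.2⟩
  loopless u h := I.loopless u h.1
  pref u x y := I.pref u x y ∧ s(u, x) ∉ F ∧ s(u, y) ∉ F
  pref_acc h := ⟨⟨(I.pref_acc h.1).1, h.2.1⟩, ⟨(I.pref_acc h.1).2, h.2.2⟩⟩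
  pref_irrefl u x h := I.pref_irrefl u x h.1
  pref_trans h1 h2 := ⟨I.pref_trans h1.1 h2.1, h1.2.1, h2.2.2⟩
  pref_total hx hy hne :=
    (I.pref_total hx.1 hy.1 hne).imp (fun h => ⟨h, hx.2, hy.2⟩) (fun h => ⟨h, hy.2, hx.2⟩)

/-- The sub-instance of `I` induced by the agent set `T`. -/
def induce (I : SR α) (T : Set α) : SR α where
  accept u v := I.accept u v ∧ u ∈ T ∧ v ∈ T
  symm h := ⟨I.symm h.1, h.2.2, h.2.1⟩
  loopless u h := I.loopless u h.1
  pref u x y := I.pref u x y ∧ u ∈ T ∧ x ∈ T ∧ y ∈ T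
  pref_acc h := ⟨⟨(I.pref_acc h.1).1, h.2.1, h.2.2.1⟩, ⟨(I.pref_acc h.1).2, h.2.1, h.2.2.2⟩⟩
  pref_irrefl u x h := I.pref_irrefl u x h.1
  pref_trans h1 h2 := ⟨I.pref_trans h1.1 h2.1, h1.2.1, h1.2.2.1, h2.2.2.2⟩
  pref_total hx hy hne :=
    (I.pref_total hx.1 hy.1 hne).imp (fun h => ⟨h, hx.2.1, hx.2.2, hy.2.2⟩)
      (fun h => ⟨h, hx.2.1, hy.2.2, hx.2.2⟩)

/-- The instance obtained from `I` by deleting the agents in `W`. -/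
def delAgents (I : SR α) (W : Set α) : SR α := I.induce Wᶜ

end SR

/-! ## The clique construction `I(G, k)` -/

/-- Agents of the instance `I(G, k)`: women `w_v`, `w_e`, selector women `s_i`, `w*`;
men `m'_v`, `m_e`, `m'_e`, dummy men `d_i`, and `m*`.  (Agents whose index is out of
range — `we e` or `me e` or `me' e` with `e` not an edge, `sel i` with
`i ≥ k(k-1)/2`, `dum i` with `i ≥ |V| - k` — are inactive: they accept nobody.) -/
inductive CAg (V : Type*) where
  | wv : V → CAg V          -- woman `w_v`
  | we : Sym2 V → CAg V     -- woman `w_e`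
  | sel : ℕ → CAg V         -- selector woman `s_i`
  | wstar : CAg V           -- woman `w*`
  | mv : V → CAg V          -- man `m'_v`
  | me : Sym2 V → CAg V     -- man `m_e`
  | me' : Sym2 V → CAg V    -- man `m'_e`
  | dum : ℕ → CAg V         -- dummy man `d_i`
  | mstar : CAg V           -- man `m*`
  deriving DecidableEq

open CAg

/-- The acceptability lists of `I(G, k)` (from the men's side, plus `m*`'s list);
`q = k(k-1)/2` is the number of selector women and `d = |V| - k` the number of dummies. -/
def cliqueBaseAcc {V : Type*} (G : SimpleGraph V) (q d : ℕ) (x y : CAg V) : Prop :=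
  (x = mstar ∧ ((∃ i < q, y = sel i) ∨ y = wstar)) ∨
  (∃ i < q, x = sel i ∧ ∃ e ∈ G.edgeSet, y = me e) ∨
  (∃ e ∈ G.edgeSet, x = me e ∧ (y = we e ∨ ∃ v ∈ e, y = wv v)) ∨
  (∃ e ∈ G.edgeSet, x = me' e ∧ y = we e) ∨
  (∃ v : V, x = mv v ∧ y = wv v) ∨
  (∃ i < d, x = dum i ∧ ∃ v : V, y = wv v)

/-- `I` is a realization of the instance `I(G, k)`: its acceptability relation is as
prescribed, and its preferences respect all comparisons forced by the construction
(within each unordered set in a preference list the order is arbitrary). -/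
def IsCliqueInstance {V : Type*} [Fintype V] (G : SimpleGraph V) (k : ℕ)
    (I : SR (CAg V)) : Prop :=
  (∀ x y, I.accept x y ↔
    (cliqueBaseAcc G (k * (k - 1) / 2) (Fintype.card V - k) x y ∨
     cliqueBaseAcc G (k * (k - 1) / 2) (Fintype.card V - k) y x)) ∧
  -- m*: S ≻ w*
  (∀ i < k * (k - 1) / 2, I.pref mstar (sel i) wstar) ∧
  -- s: {m_e : e ∈ E} ≻ m*
  (∀ i < k * (k - 1) / 2, ∀ e ∈ G.edgeSet, I.pref (sel i) (me e) mstar) ∧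
  -- m_e: w_e ≻ {w_v : v ∈ e} ≻ S
  (∀ e ∈ G.edgeSet, ∀ v ∈ e, I.pref (me e) (we e) (wv v)) ∧
  (∀ e ∈ G.edgeSet, ∀ v ∈ e, ∀ i < k * (k - 1) / 2, I.pref (me e) (wv v) (sel i)) ∧
  (∀ e ∈ G.edgeSet, ∀ i < k * (k - 1) / 2, I.pref (me e) (we e) (sel i)) ∧
  -- w_e: m'_e ≻ m_e
  (∀ e ∈ G.edgeSet, I.pref (we e) (me' e) (me e)) ∧
  -- w_v: m'_v ≻ {m_e : e ∋ v} ≻ D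
  (∀ v : V, ∀ e ∈ G.edgeSet, v ∈ e → I.pref (wv v) (mv v) (me e)) ∧
  (∀ v : V, ∀ e ∈ G.edgeSet, v ∈ e → ∀ i < Fintype.card V - k, I.pref (wv v) (me e) (dum i)) ∧
  (∀ v : V, ∀ i < Fintype.card V - k, I.pref (wv v) (mv v) (dum i))

/-- The original agents of `I(G, k)`: everybody except the addable men `m'_v`, `m'_e`. -/
def cliqueOrig {V : Type*} [Fintype V] (G : SimpleGraph V) (k : ℕ) : Set (CAg V) :=
  {x | (∃ v : V, x = wv v) ∨ (∃ e ∈ G.edgeSet, x = we e) ∨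
    (∃ i < k * (k - 1) / 2, x = sel i) ∨ x = wstar ∨
    (∃ e ∈ G.edgeSet, x = me e) ∨ (∃ i < Fintype.card V - k, x = dum i) ∨ x = mstar}

/-- The addable men `M'_V = {m'_v : v ∈ V}`. -/
def addableMV {V : Type*} : Set (CAg V) := {x | ∃ v : V, x = mv v}

/-- The addable men `M'_E = {m'_e : e ∈ E}`. -/
def addableME {V : Type*} (G : SimpleGraph V) : Set (CAg V) :=
  {x | ∃ e ∈ G.edgeSet, x = me' e}

/-- A pair `{m_e, w_v}` with `v` an endpoint of the edge `e` is *problematic*. -/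
def Problematic {V : Type*} (G : SimpleGraph V) (p : Sym2 (CAg V)) : Prop :=
  ∃ e ∈ G.edgeSet, ∃ v ∈ e, p = s(me e, wv v)

open CAg

lemma acc_me_cases {V : Type*} {G : SimpleGraph V} {q d : ℕ} {e : Sym2 V} {x : CAg V}
    (h : cliqueBaseAcc G q d (me e) x ∨ cliqueBaseAcc G q d x (me e)) :
    x = we e ∨ (∃ u ∈ e, x = wv u) ∨ (∃ i < q, x = sel i) := by
  rcases h with h|h <;> simp [cliqueBaseAcc] at h
  · obtain ⟨_, h⟩ := h
    rcases h with rfl | ⟨u, hu, rfl⟩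
    · exact Or.inl rfl
    · exact Or.inr (Or.inl ⟨u, hu, rfl⟩)
  · obtain ⟨i, hi, rfl, -⟩ := h; exact Or.inr (Or.inr ⟨i, hi, rfl⟩)

lemma acc_we_cases {V : Type*} {G : SimpleGraph V} {q d : ℕ} {e : Sym2 V} {x : CAg V}
    (h : cliqueBaseAcc G q d (we e) x ∨ cliqueBaseAcc G q d x (we e)) :
    x = me e ∨ x = me' e := by
  rcases h with h|h <;> simp [cliqueBaseAcc] at h
  rcases h with ⟨f, _, rfl, rfl⟩ | ⟨f, _, rfl, rfl⟩ <;> tauto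

lemma acc_wv_cases {V : Type*} {G : SimpleGraph V} {q d : ℕ} {v : V} {x : CAg V}
    (h : cliqueBaseAcc G q d (wv v) x ∨ cliqueBaseAcc G q d x (wv v)) :
    x = mv v ∨ (∃ f ∈ G.edgeSet, v ∈ f ∧ x = me f) ∨ (∃ i < d, x = dum i) := by
  rcases h with h|h <;> simp [cliqueBaseAcc] at h
  rcases h with ⟨f, hf, rfl, hvf⟩ | ⟨rfl⟩ | ⟨i, hi, rfl, -⟩
  · exact Or.inr (Or.inl ⟨f, hf, hvf, rfl⟩)
  · exact Or.inl rfl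
  · exact Or.inr (Or.inr ⟨i, hi, rfl⟩)

lemma acc_mv_cases {V : Type*} {G : SimpleGraph V} {q d : ℕ} {v : V} {x : CAg V}
    (h : cliqueBaseAcc G q d (mv v) x ∨ cliqueBaseAcc G q d x (mv v)) :
    x = wv v := by
  rcases h with h|h <;> simp [cliqueBaseAcc] at h
  exact h

lemma acc_me'_cases {V : Type*} {G : SimpleGraph V} {q d : ℕ} {e : Sym2 V} {x : CAg V}
    (h : cliqueBaseAcc G q d (me' e) x ∨ cliqueBaseAcc G q d x (me' e)) :
    x = we e := by
  rcases h with h|h <;> simp [cliqueBaseAcc] at h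
  obtain ⟨f, _, rfl, rfl⟩ := h; rfl

lemma bacc_me_we {V : Type*} {G : SimpleGraph V} {q d : ℕ} {e : Sym2 V} (he : e ∈ G.edgeSet) :
    cliqueBaseAcc G q d (me e) (we e) := by simp [cliqueBaseAcc]; tauto

lemma bacc_me'_we {V : Type*} {G : SimpleGraph V} {q d : ℕ} {e : Sym2 V} (he : e ∈ G.edgeSet) :
    cliqueBaseAcc G q d (me' e) (we e) := by simp [cliqueBaseAcc]; tauto

lemma bacc_mv_wv {V : Type*} {G : SimpleGraph V} {q d : ℕ} {v : V} :
    cliqueBaseAcc G q d (mv v) (wv v) := by simp [cliqueBaseAcc]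

lemma orig_me {V : Type*} [Fintype V] {G : SimpleGraph V} {k : ℕ} {e : Sym2 V}
    (he : e ∈ G.edgeSet) : me e ∈ cliqueOrig G k := by simp [cliqueOrig]; tauto

lemma orig_we {V : Type*} [Fintype V] {G : SimpleGraph V} {k : ℕ} {e : Sym2 V}
    (he : e ∈ G.edgeSet) : we e ∈ cliqueOrig G k := by simp [cliqueOrig]; tauto

lemma orig_wv {V : Type*} [Fintype V] {G : SimpleGraph V} {k : ℕ} {v : V} :
    wv v ∈ cliqueOrig G k := by simp [cliqueOrig]

lemma not_orig_me' {V : Type*} [Fintype V] {G : SimpleGraph V} {k : ℕ} {e : Sym2 V} :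
    me' e ∉ cliqueOrig G k := by simp [cliqueOrig]

lemma not_orig_mv {V : Type*} [Fintype V] {G : SimpleGraph V} {k : ℕ} {v : V} :
    mv v ∉ cliqueOrig G k := by simp [cliqueOrig]

/-- Let `W ⊆ M'_V ∪ M'_E` and let `M` be a stable matching in `I_W`
covering `w*` that contains a problematic pair `{m_e, w_v}` (with `v` an endpoint of
the edge `e`). Then `m'_e ∈ W` and `M(w_e) = m'_e`, and for
`W' = (W ∖ {m'_e}) ∪ {m'_v}` (so `|W'| ≤ |W|`), the matching
`M' = (M ∖ {{m_e,w_v},{m'_e,w_e}}) ∪ {{m_e,w_e},{m'_v,w_v}}` is a stable matching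
in `I_{W'}` covering `w*` with strictly fewer problematic pairs than `M`. -/
theorem csm_addAg_clique_exchange {V : Type*} [Fintype V] [DecidableEq V]
    (G : SimpleGraph V) (k : ℕ) (I : SR (CAg V)) (hI : IsCliqueInstance G k I)
    (W : Set (CAg V)) (hW : W ⊆ addableMV ∪ addableME G)
    (M : Finset (Sym2 (CAg V)))
    (hM : (I.induce (cliqueOrig G k ∪ W)).IsStable M)
    (hcov : ∃ y, s(CAg.wstar, y) ∈ M)
    (e : Sym2 V) (he : e ∈ G.edgeSet) (v : V) (hv : v ∈ e)
    (hprob : s(CAg.me e, CAg.wv v) ∈ M) :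
    CAg.me' e ∈ W ∧ s(CAg.me' e, CAg.we e) ∈ M ∧
    ∀ W' : Set (CAg V), W' = (W \ {CAg.me' e}) ∪ {CAg.mv v} →
      W'.ncard ≤ W.ncard ∧
      ∀ M' : Finset (Sym2 (CAg V)),
        M' = (M \ {s(CAg.me e, CAg.wv v), s(CAg.me' e, CAg.we e)}) ∪
             {s(CAg.me e, CAg.we e), s(CAg.mv v, CAg.wv v)} →
        (I.induce (cliqueOrig G k ∪ W')).IsStable M' ∧
        (∃ y, s(CAg.wstar, y) ∈ M') ∧
        {p : Sym2 (CAg V) | p ∈ M' ∧ Problematic G p}.ncard <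
          {p : Sym2 (CAg V) | p ∈ M ∧ Problematic G p}.ncard := by
  obtain ⟨hacc, hpMS, hpSel, hpEW, hpEV, hpES, hpWE, hpV1, hpV2, hpV3⟩ := hI
  obtain ⟨⟨hMacc, hMuniq⟩, hMstab⟩ := hM
  have haccI : ∀ a x : CAg V, I.accept a x →
      (cliqueBaseAcc G (k * (k - 1) / 2) (Fintype.card V - k) a x ∨
       cliqueBaseAcc G (k * (k - 1) / 2) (Fintype.card V - k) x a) :=
    fun a x h => (hacc a x).1 h
  have hMe_part : ∀ w, s(me e, w) ∈ M → w = wv v := fun w hw => hMuniq _ _ _ hw hprob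
  have hprob' : s(wv v, me e) ∈ M := by rw [Sym2.eq_swap]; exact hprob
  have hWv_part : ∀ w, s(wv v, w) ∈ M → w = me e := fun w hw => hMuniq _ _ _ hw hprob'
  have hWeM : s(we e, me' e) ∈ M := by
    by_contra hne
    refine hMstab (me e) (we e)
      ⟨⟨(hacc _ _).2 (Or.inl (bacc_me_we he)), Or.inl (orig_me he), Or.inl (orig_we he)⟩, ?_, ?_⟩
    · intro w hw
      obtain rfl := hMe_part w hw
      exact ⟨hpEW e he v hv, Or.inl (orig_me he), Or.inl (orig_we he), Or.inl orig_wv⟩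
    · intro w hw
      have hx := (hMacc _ _ hw).1
      rcases acc_we_cases (haccI _ _ hx) with rfl | rfl
      · have hmem : s(me e, we e) ∈ M := by rw [Sym2.eq_swap]; exact hw
        exact absurd (hMe_part _ hmem) (by simp)
      · exact absurd hw hne
  have hMe'M : s(me' e, we e) ∈ M := by rw [Sym2.eq_swap]; exact hWeM
  have hWe_part : ∀ w, s(we e, w) ∈ M → w = me' e := fun w hw => hMuniq _ _ _ hw hWeM
  have hMe'_part : ∀ w, s(me' e, w) ∈ M → w = we e := fun w hw => hMuniq _ _ _ hw hMe'M
  have hMv_unm : ∀ w, s(mv v, w) ∈ M → False := by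
    intro w hw
    obtain rfl := acc_mv_cases (haccI _ _ (hMacc _ _ hw).1)
    have hmem : s(wv v, mv v) ∈ M := by rw [Sym2.eq_swap]; exact hw
    exact absurd (hWv_part _ hmem) (by simp)
  have hMe'W : me' e ∈ W := by
    rcases (hMacc _ _ hMe'M).2.1 with h | h
    · exact absurd h not_orig_me'
    · exact h
  refine ⟨hMe'W, hMe'M, ?_⟩
  intro W' hW'
  have hWfin : W.Finite := by
    refine Set.Finite.subset (Set.Finite.union ?_ ?_) hW
    · exact Set.Finite.subset (Set.finite_range CAg.mv) (by rintro x ⟨u, rfl⟩; exact ⟨u, rfl⟩)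
    · exact Set.Finite.subset (Set.finite_range CAg.me') (by rintro x ⟨f, _, rfl⟩; exact ⟨f, rfl⟩)
  constructor
  · rw [hW']
    have h1 : (W \ {me' e} : Set (CAg V)).ncard = W.ncard - 1 :=
      Set.ncard_diff_singleton_of_mem hMe'W
    have h3 : 1 ≤ W.ncard := (Set.ncard_pos hWfin).2 ⟨_, hMe'W⟩
    calc ((W \ {me' e}) ∪ {mv v} : Set (CAg V)).ncard
        = (insert (mv v) (W \ {me' e})).ncard := by rw [Set.union_singleton]
      _ ≤ (W \ {me' e}).ncard + 1 := Set.ncard_insert_le _ _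
      _ = W.ncard - 1 + 1 := by rw [h1]
      _ ≤ W.ncard := by omega
  intro M' hM'
  have hT' : ∀ a : CAg V, a ∈ cliqueOrig G k ∪ W' ↔
      (a ∈ cliqueOrig G k ∨ (a ∈ W ∧ a ≠ me' e) ∨ a = mv v) := by
    intro a
    rw [hW']
    simp only [Set.mem_union, Set.mem_diff, Set.mem_singleton_iff]
  have hM'mem : ∀ p, p ∈ M' ↔
      ((p ∈ M ∧ p ≠ s(me e, wv v) ∧ p ≠ s(me' e, we e)) ∨
       p = s(me e, we e) ∨ p = s(mv v, wv v)) := by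
    intro p
    rw [hM']
    simp only [Finset.mem_union, Finset.mem_sdiff, Finset.mem_insert, Finset.mem_singleton]
    tauto
  have hme'T' : me' e ∉ cliqueOrig G k ∪ W' := by
    rw [hT' (me' e)]
    rintro (h | ⟨-, h⟩ | h)
    · exact not_orig_me' h
    · exact h rfl
    · exact absurd h (by simp)
  have hp3M' : s(me e, we e) ∈ M' := (hM'mem _).2 (Or.inr (Or.inl rfl))
  have hp4M' : s(mv v, wv v) ∈ M' := (hM'mem _).2 (Or.inr (Or.inr rfl))
  have hMe_part' : ∀ w, s(me e, w) ∈ M' → w = we e := by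
    intro w hw
    rcases (hM'mem _).1 hw with ⟨hm, hne1, -⟩ | h | h
    · obtain rfl := hMe_part _ hm; exact absurd rfl hne1
    · simp [Sym2.eq_iff] at h; exact h
    · simp [Sym2.eq_iff] at h
  have hWe_part' : ∀ w, s(we e, w) ∈ M' → w = me e := by
    intro w hw
    rcases (hM'mem _).1 hw with ⟨hm, -, hne2⟩ | h | h
    · obtain rfl := hWe_part _ hm; exact absurd Sym2.eq_swap hne2
    · simp [Sym2.eq_iff] at h; exact h
    · simp [Sym2.eq_iff] at h
  have hWv_part' : ∀ w, s(wv v, w) ∈ M' → w = mv v := by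
    intro w hw
    rcases (hM'mem _).1 hw with ⟨hm, hne1, -⟩ | h | h
    · obtain rfl := hWv_part _ hm; exact absurd Sym2.eq_swap hne1
    · simp [Sym2.eq_iff] at h
    · simp [Sym2.eq_iff] at h; exact h
  have hMv_part' : ∀ w, s(mv v, w) ∈ M' → w = wv v := by
    intro w hw
    rcases (hM'mem _).1 hw with ⟨hm, -, -⟩ | h | h
    · exact absurd hm (fun hmm => hMv_unm _ hmm)
    · simp [Sym2.eq_iff] at h
    · simp [Sym2.eq_iff] at h; exact h
  have hMe'_none' : ∀ w, s(me' e, w) ∈ M' → False := by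
    intro w hw
    rcases (hM'mem _).1 hw with ⟨hm, -, hne2⟩ | h | h
    · obtain rfl := hMe'_part _ hm; exact hne2 rfl
    · simp [Sym2.eq_iff] at h
    · simp [Sym2.eq_iff] at h
  have hOld : ∀ u w : CAg V, u ≠ me e → u ≠ we e → u ≠ wv v → u ≠ mv v → u ≠ me' e →
      (s(u, w) ∈ M' ↔ s(u, w) ∈ M) := by
    intro u w h1 h2 h3 h4 h5
    constructor
    · intro hw
      rcases (hM'mem _).1 hw with ⟨hm, -, -⟩ | h | h
      · exact hm
      · rcases Sym2.eq_iff.1 h with ⟨hu, -⟩ | ⟨hu, -⟩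
        · exact absurd hu h1
        · exact absurd hu h2
      · rcases Sym2.eq_iff.1 h with ⟨hu, -⟩ | ⟨hu, -⟩
        · exact absurd hu h4
        · exact absurd hu h3
    · intro hm
      refine (hM'mem _).2 (Or.inl ⟨hm, ?_, ?_⟩)
      · intro hEq
        rcases Sym2.eq_iff.1 hEq with ⟨hu, -⟩ | ⟨hu, -⟩
        · exact h1 hu
        · exact h3 hu
      · intro hEq
        rcases Sym2.eq_iff.1 hEq with ⟨hu, -⟩ | ⟨hu, -⟩
        · exact h5 hu
        · exact h2 hu
  have hTT : ∀ a : CAg V, a ∈ cliqueOrig G k ∪ W → a ≠ me' e → a ∈ cliqueOrig G k ∪ W' := by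
    intro a ha hne
    rcases ha with h | h
    · exact (hT' a).2 (Or.inl h)
    · exact (hT' a).2 (Or.inr (Or.inl ⟨h, hne⟩))
  have hTT' : ∀ a : CAg V, a ∈ cliqueOrig G k ∪ W' → a ≠ mv v → a ∈ cliqueOrig G k ∪ W := by
    intro a ha hne
    rcases (hT' a).1 ha with h | ⟨h, -⟩ | h
    · exact Or.inl h
    · exact Or.inr h
    · exact absurd h hne
  have hM'match : (I.induce (cliqueOrig G k ∪ W')).IsMatching M' := by
    constructor
    · intro u w hw
      rcases (hM'mem _).1 hw with ⟨hm, hne1, hne2⟩ | h | h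
      · have ha := hMacc _ _ hm
        have hu' : u ≠ me' e := by
          rintro rfl
          obtain rfl := hMe'_part _ hm
          exact hne2 rfl
        have hw' : w ≠ me' e := by
          rintro rfl
          have hmem : s(me' e, u) ∈ M := by rw [Sym2.eq_swap]; exact hm
          obtain rfl := hMe'_part _ hmem
          exact hne2 Sym2.eq_swap
        exact ⟨ha.1, hTT _ ha.2.1 hu', hTT _ ha.2.2 hw'⟩
      · rcases Sym2.eq_iff.1 h with ⟨rfl, rfl⟩ | ⟨rfl, rfl⟩
        · exact ⟨(hacc _ _).2 (Or.inl (bacc_me_we he)), (hT' _).2 (Or.inl (orig_me he)),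
            (hT' _).2 (Or.inl (orig_we he))⟩
        · exact ⟨I.symm ((hacc _ _).2 (Or.inl (bacc_me_we he))), (hT' _).2 (Or.inl (orig_we he)),
            (hT' _).2 (Or.inl (orig_me he))⟩
      · rcases Sym2.eq_iff.1 h with ⟨rfl, rfl⟩ | ⟨rfl, rfl⟩
        · exact ⟨(hacc _ _).2 (Or.inl bacc_mv_wv), (hT' _).2 (Or.inr (Or.inr rfl)),
            (hT' _).2 (Or.inl orig_wv)⟩
        · exact ⟨I.symm ((hacc _ _).2 (Or.inl bacc_mv_wv)), (hT' _).2 (Or.inl orig_wv),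
            (hT' _).2 (Or.inr (Or.inr rfl))⟩
    · intro u a b ha hb
      by_cases h1 : u = me e
      · subst h1; rw [hMe_part' _ ha, hMe_part' _ hb]
      by_cases h2 : u = we e
      · subst h2; rw [hWe_part' _ ha, hWe_part' _ hb]
      by_cases h3 : u = wv v
      · subst h3; rw [hWv_part' _ ha, hWv_part' _ hb]
      by_cases h4 : u = mv v
      · subst h4; rw [hMv_part' _ ha, hMv_part' _ hb]
      by_cases h5 : u = me' e
      · subst h5; exact absurd ha (fun hh => hMe'_none' _ hh)
      · exact hMuniq u a b ((hOld u a h1 h2 h3 h4 h5).1 ha) ((hOld u b h1 h2 h3 h4 h5).1 hb)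
  have hnospec : ∀ u x : CAg V, (I.induce (cliqueOrig G k ∪ W')).Blocks M' u x →
      u ≠ me e ∧ u ≠ we e ∧ u ≠ wv v ∧ u ≠ mv v ∧ u ≠ me' e := by
    intro u x hb
    obtain ⟨hax, hbu, hbx⟩ := hb
    refine ⟨?_, ?_, ?_, ?_, ?_⟩
    · rintro rfl
      have hpx := (hbu _ hp3M').1
      rcases acc_me_cases (haccI _ _ (I.pref_acc hpx).1) with rfl | ⟨u', hu', rfl⟩ | ⟨i, hi, rfl⟩
      · exact I.pref_irrefl _ _ hpx
      · exact I.pref_irrefl _ _ (I.pref_trans hpx (hpEW e he u' hu'))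
      · exact I.pref_irrefl _ _ (I.pref_trans hpx (hpES e he i hi))
    · rintro rfl
      have hmem : s(we e, me e) ∈ M' := by rw [Sym2.eq_swap]; exact hp3M'
      have hpx := (hbu _ hmem).1
      rcases acc_we_cases (haccI _ _ (I.pref_acc hpx).1) with rfl | rfl
      · exact I.pref_irrefl _ _ hpx
      · exact hme'T' hax.2.2
    · rintro rfl
      have hmem : s(wv v, mv v) ∈ M' := by rw [Sym2.eq_swap]; exact hp4M'
      have hpx := (hbu _ hmem).1
      rcases acc_wv_cases (haccI _ _ (I.pref_acc hpx).1) with rfl | ⟨f, hf, hvf, rfl⟩ | ⟨i, hi, rfl⟩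
      · exact I.pref_irrefl _ _ hpx
      · exact I.pref_irrefl _ _ (I.pref_trans hpx (hpV1 v f hf hvf))
      · exact I.pref_irrefl _ _ (I.pref_trans hpx (hpV3 v i hi))
    · rintro rfl
      have hpx := (hbu _ hp4M').1
      obtain rfl := acc_mv_cases (haccI _ _ (I.pref_acc hpx).1)
      exact I.pref_irrefl _ _ hpx
    · rintro rfl
      exact hme'T' hax.2.1
  refine ⟨⟨hM'match, ?_⟩, ?_, ?_⟩
  · intro u x hb
    have hbs : (I.induce (cliqueOrig G k ∪ W')).Blocks M' x u :=
      ⟨(I.induce _).symm hb.1, hb.2.2, hb.2.1⟩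
    obtain ⟨hu1, hu2, hu3, hu4, hu5⟩ := hnospec u x hb
    obtain ⟨hx1, hx2, hx3, hx4, hx5⟩ := hnospec x u hbs
    obtain ⟨hax, hbu, hbx⟩ := hb
    have huT : u ∈ cliqueOrig G k ∪ W := hTT' _ hax.2.1 hu4
    have hxT : x ∈ cliqueOrig G k ∪ W := hTT' _ hax.2.2 hx4
    refine hMstab u x ⟨⟨hax.1, huT, hxT⟩, ?_, ?_⟩
    · intro w hw
      have hw' : s(u, w) ∈ M' := (hOld u w hu1 hu2 hu3 hu4 hu5).2 hw
      exact ⟨(hbu _ hw').1, huT, hxT, (hMacc _ _ hw).2.2⟩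
    · intro w hw
      have hw' : s(x, w) ∈ M' := (hOld x w hx1 hx2 hx3 hx4 hx5).2 hw
      exact ⟨(hbx _ hw').1, hxT, huT, (hMacc _ _ hw).2.2⟩
  · obtain ⟨y, hy⟩ := hcov
    exact ⟨y, (hOld wstar y (by simp) (by simp) (by simp) (by simp) (by simp)).2 hy⟩
  · have hssub : {p : Sym2 (CAg V) | p ∈ M' ∧ Problematic G p} ⊂
        {p : Sym2 (CAg V) | p ∈ M ∧ Problematic G p} := by
      rw [Set.ssubset_def]
      constructor
      · rintro p ⟨hp, hprobp⟩
        refine ⟨?_, hprobp⟩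
        rcases (hM'mem _).1 hp with ⟨hm, -, -⟩ | h | h
        · exact hm
        · obtain ⟨f, hf, u, hu, rfl⟩ := hprobp
          rcases Sym2.eq_iff.1 h with ⟨h1, h2⟩ | ⟨h1, h2⟩ <;> simp at h1 h2
        · obtain ⟨f, hf, u, hu, rfl⟩ := hprobp
          rcases Sym2.eq_iff.1 h with ⟨h1, h2⟩ | ⟨h1, h2⟩ <;> simp at h1 h2
      · intro hsub
        have h1 : s(me e, wv v) ∈ {p : Sym2 (CAg V) | p ∈ M ∧ Problematic G p} :=
          ⟨hprob, e, he, v, hv, rfl⟩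
        have h2 := hsub h1
        have h3 := hMe_part' _ h2.1
        simp at h3
    have hfin : {p : Sym2 (CAg V) | p ∈ M ∧ Problematic G p}.Finite :=
      M.finite_toSet.subset (fun p hp => hp.1)
    exact Set.ncard_lt_ncard hssub hfin
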